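/- Define Λ_A(θ) = -θ - log 2 for θ ≤ -1, Λ_A(θ) = -θ - log(1-θ) for -1 < θ < 1, and Λ_A(θ) = +∞ for θ ≥ 1. Then its Legendre transform sup_{θ∈ℝ}(θx - Λ_A(θ)) equals x - log(x+1) if x > -1/2, equals -x - 1 + log 2 if -1 ≤ x ≤ -1/2, and equals +∞ if x < -1. -/

import Mathlib

/-- The logarithmic moment generating function for A-processes. -/
noncomputable def ΛA (θ : ℝ) : EReal :=
  if θ ≤ -1 then ((-θ - Real.log 2 : ℝ) : EReal)
  else if θ < 1 then ((-θ - Real.log (1 - θ) : ℝ) : EReal)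
  else ⊤

/-- The Legendre transform of `Λ_A` equals `x - log(x+1)` for `x > -1/2`,
`-x - 1 + log 2` for `-1 ≤ x ≤ -1/2`, and `+∞` for `x < -1`. -/
theorem legendre_transform_A (x : ℝ) :
    (⨆ θ : ℝ, ((θ * x : ℝ) : EReal) - ΛA θ) =
      if -1/2 < x then ((x - Real.log (x + 1) : ℝ) : EReal)
      else if -1 ≤ x then ((-x - 1 + Real.log 2 : ℝ) : EReal)
      else ⊤ := by
  split_ifs with hx1 hx2
  · -- x > -1/2
    have hx : 0 < x + 1 := by linarith
    set t := x / (x + 1) with ht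
    have ht1 : 1 - t = 1 / (x + 1) := by rw [ht]; field_simp; ring
    have htlt : t < 1 := by rw [ht, div_lt_one hx]; linarith
    have htgt : ¬ t ≤ -1 := by
      push_neg
      rw [ht, lt_div_iff₀ hx]; linarith
    apply le_antisymm
    · apply iSup_le; intro θ
      simp only [ΛA]
      split_ifs with h1 h2'
      · rw [← EReal.coe_sub, EReal.coe_le_coe_iff]
        have hl := Real.log_le_sub_one_of_pos (show (0:ℝ) < 2 * (x + 1) by linarith)
        rw [Real.log_mul two_ne_zero (by linarith)] at hl
        nlinarith [mul_nonpos_of_nonpos_of_nonneg (show θ + 1 ≤ 0 by linarith) hx.le]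
      · rw [← EReal.coe_sub, EReal.coe_le_coe_iff]
        have hθ : 0 < 1 - θ := by linarith
        have hl := Real.log_le_sub_one_of_pos (mul_pos hθ hx)
        rw [Real.log_mul (ne_of_gt hθ) (ne_of_gt hx)] at hl
        nlinarith [hl]
      · simp [EReal.sub_top]
    · have key : ((x - Real.log (x + 1) : ℝ) : EReal) = ((t * x : ℝ) : EReal) - ΛA t := by
        simp only [ΛA, if_neg htgt, if_pos htlt]
        rw [← EReal.coe_sub]
        apply congrArg Real.toEReal
        have hlog : Real.log (1 - t) = - Real.log (x + 1) := by
          rw [ht1, one_div, Real.log_inv]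
        have htx : t * (x + 1) = x := div_mul_cancel₀ x (ne_of_gt hx)
        nlinarith [hlog, htx]
      rw [key]; exact le_iSup (fun θ : ℝ => ((θ * x : ℝ) : EReal) - ΛA θ) t
  · -- -1 ≤ x ≤ -1/2
    push_neg at hx1
    apply le_antisymm
    · apply iSup_le; intro θ
      simp only [ΛA]
      split_ifs with h1 h2'
      · rw [← EReal.coe_sub, EReal.coe_le_coe_iff]
        nlinarith [mul_nonpos_of_nonpos_of_nonneg (show θ + 1 ≤ 0 by linarith)
          (show (0:ℝ) ≤ x + 1 by linarith)]
      · rw [← EReal.coe_sub, EReal.coe_le_coe_iff]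
        have hθ : 0 < 1 - θ := by linarith
        have hl := Real.log_le_sub_one_of_pos (show (0:ℝ) < (1 - θ) / 2 by linarith)
        rw [Real.log_div (ne_of_gt hθ) two_ne_zero] at hl
        nlinarith [mul_nonpos_of_nonneg_of_nonpos (show (0:ℝ) ≤ θ + 1 by linarith)
          (show x + 1/2 ≤ 0 by linarith)]
      · simp [EReal.sub_top]
    · have key : ((-x - 1 + Real.log 2 : ℝ) : EReal) = (((-1) * x : ℝ) : EReal) - ΛA (-1) := by
        simp only [ΛA, if_pos (le_refl (-1:ℝ))]
        rw [← EReal.coe_sub]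
        exact congrArg Real.toEReal (by ring)
      rw [key]; exact le_iSup (fun θ : ℝ => ((θ * x : ℝ) : EReal) - ΛA θ) (-1)
  · -- x < -1
    push_neg at hx1 hx2
    rw [iSup_eq_top]
    intro b hb
    induction b with
    | bot =>
        refine ⟨-1, ?_⟩
        simp only [ΛA, if_pos (le_refl (-1:ℝ))]
        rw [← EReal.coe_sub]
        exact EReal.bot_lt_coe _
    | coe r =>
        refine ⟨-(max 1 ((r - Real.log 2) / (-x - 1) + 1)), ?_⟩
        set M := max 1 ((r - Real.log 2) / (-x - 1) + 1) with hM
        have hM1 : (1:ℝ) ≤ M := le_max_left _ _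
        have hM2 : (r - Real.log 2) / (-x - 1) + 1 ≤ M := le_max_right _ _
        simp only [ΛA, if_pos (show -M ≤ -1 by linarith)]
        rw [← EReal.coe_sub, EReal.coe_lt_coe_iff]
        have hx' : (0:ℝ) < -x - 1 := by linarith
        have h3 : (r - Real.log 2) / (-x - 1) ≤ M - 1 := by linarith
        have h4 := (div_le_iff₀ hx').mp h3
        nlinarith [h4, hx']
    | top => exact absurd hb (lt_irrefl ⊤)
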